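/- Let $\gamma:I\to\mathbb{R}^d$ be $C^1$ on an interval $I$, and suppose $\det(\gamma'(t_1),\ldots,\gamma'(t_d))\ne 0$ whenever $t_1<\cdots<t_d$ in $I$. Then the vectors $\gamma(w_1)-\gamma(w_2),\ \gamma(w_2)-\gamma(w_3),\ \ldots,\ \gamma(w_d)-\gamma(w_{d+1})$ are linearly independent for any $w_1<w_2<\cdots<w_{d+1}$ in $I$. -/

import Mathlib

open Set

theorem stmt7 (d : ℕ) (hd : 1 ≤ d) (I : Set ℝ) (hI : I.OrdConnected)
    (γ : ℝ → (Fin d → ℝ)) (hγ : ContDiffOn ℝ 1 γ I)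
    (hdet : ∀ t : Fin d → ℝ, (∀ i, t i ∈ I) → StrictMono t →
      Matrix.det (Matrix.of fun i j => deriv γ (t i) j) ≠ 0) :
    ∀ w : Fin (d + 1) → ℝ, (∀ j, w j ∈ I) → StrictMono w →
      LinearIndependent ℝ (fun j : Fin d => γ (w j.castSucc) - γ (w j.succ)) := by
  intro w hwI hw
  set v : Fin d → (Fin d → ℝ) := fun j => γ (w j.castSucc) - γ (w j.succ) with hv
  by_contra hdep
  -- the span of the v's is proper
  have hspan : Submodule.span ℝ (Set.range v) < ⊤ := by
    rcases lt_or_eq_of_le (le_top (a := Submodule.span ℝ (Set.range v))) with h | h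
    · exact h
    · exfalso
      exact hdep (linearIndependent_of_top_le_span_of_card_eq_finrank h.ge (by simp))
  obtain ⟨f, hf0, hfmap⟩ :=
    Submodule.exists_dual_map_eq_bot_of_lt_top hspan inferInstance
  have hfv : ∀ j, f (v j) = 0 := by
    intro j
    have : f (v j) ∈ Submodule.map f (Submodule.span ℝ (Set.range v)) :=
      ⟨v j, Submodule.subset_span (Set.mem_range_self j), rfl⟩
    rw [hfmap] at this
    exact (Submodule.mem_bot ℝ).mp this
  set F := LinearMap.toContinuousLinearMap f with hF
  set φ : ℝ → ℝ := fun s => f (γ s) with hφ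
  -- Rolle on each interval
  have key : ∀ j : Fin d, ∃ c ∈ Ioo (w j.castSucc) (w j.succ), deriv φ c = 0 := by
    intro j
    have hab : w j.castSucc < w j.succ := hw Fin.castSucc_lt_succ
    have hsub : Icc (w j.castSucc) (w j.succ) ⊆ I := hI.out (hwI _) (hwI _)
    have hcont : ContinuousOn φ (Icc (w j.castSucc) (w j.succ)) :=
      F.continuous.comp_continuousOn (hγ.continuousOn.mono hsub)
    have heq : φ (w j.castSucc) = φ (w j.succ) := by
      have := hfv j
      simp only [hv, map_sub] at this
      linarith [this]
    exact exists_deriv_eq_zero hab hcont heq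
  choose t ht hderiv using key
  have htI : ∀ j, t j ∈ I := fun j =>
    hI.out (hwI _) (hwI _) (Ioo_subset_Icc_self (ht j))
  have htmono : StrictMono t := by
    intro j k hjk
    calc t j < w j.succ := (ht j).2
      _ ≤ w k.castSucc := hw.monotone (by
          rw [Fin.succ_le_castSucc_iff]; exact hjk)
      _ < t k := (ht k).1
  -- deriv φ (t j) = f (deriv γ (t j))
  have hderiv' : ∀ j, f (deriv γ (t j)) = 0 := by
    intro j
    have hsub : Ioo (w j.castSucc) (w j.succ) ⊆ I :=
      fun x hx => hI.out (hwI _) (hwI _) (Ioo_subset_Icc_self hx)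
    have hdiff : DifferentiableAt ℝ γ (t j) :=
      ((hγ.differentiableOn one_ne_zero).mono hsub).differentiableAt
        (Ioo_mem_nhds (ht j).1 (ht j).2)
    have h1 : HasDerivAt γ (deriv γ (t j)) (t j) := hdiff.hasDerivAt
    have h2 : HasDerivAt φ (F (deriv γ (t j))) (t j) :=
      F.hasFDerivAt.comp_hasDerivAt _ h1
    have := h2.deriv
    rw [hderiv j] at this
    simpa [hF] using this.symm
  -- kernel vector
  set u : Fin d → ℝ := fun j => f (Pi.single j 1) with hu
  have hfx : ∀ x : Fin d → ℝ, f x = ∑ j, x j * u j := by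
    intro x
    have hx : x = ∑ j, x j • (Pi.single j (1 : ℝ) : Fin d → ℝ) := by
      funext k
      simp [Pi.single_apply, Finset.sum_apply, mul_comm]
    conv_lhs => rw [hx]
    rw [map_sum]
    simp [hu, smul_eq_mul]
  have hmul : (Matrix.of fun i j => deriv γ (t i) j).mulVec u = 0 := by
    funext i
    have := hderiv' i
    rw [hfx (deriv γ (t i))] at this
    simpa [Matrix.mulVec, dotProduct] using this
  have hu0 : u = 0 := Matrix.eq_zero_of_mulVec_eq_zero (hdet t htI htmono) hmul
  apply hf0
  apply LinearMap.ext
  intro x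
  rw [hfx x, hu0]
  simp
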